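/- Let d ≥ 3 and let l₁, l₂ ∈ ℤ₀^d be linearly independent over ℝ with |l₁| = |l₂|. Let h ∈ ℤ^d with h ≠ 0 and ⟨h,l₁⟩ = ⟨h,l₂⟩ = 0. Define O(n) = h + ⌊n/2⌋·l₁ + ⌊(n+1)/2⌋·l₂ for n ∈ ℕ and Δ(n) = O(n+1) − O(n) (so Δ(n) = l₂ when n is even and Δ(n) = l₁ when n is odd). Then for all n ∈ ℕ: |O(n)|²·|Δ(n)|² − ⟨O(n), Δ(n)⟩² ≥ (n+1)²·|Δ(n)|²/(5|l₁|²); equivalently, |Π_{Δ(n)}^⊥ O(n)|² ≥ (n+1)²/(5|l₁|²). -/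
import Mathlib

noncomputable section

/-- Euclidean inner product on `ℤ^d` (integer valued). -/
def ipZ {d : ℕ} (k l : Fin d → ℤ) : ℤ := ∑ i, k i * l i

/-- Squared Euclidean norm on `ℤ^d` (integer valued). -/
def nsqZ {d : ℕ} (k : Fin d → ℤ) : ℤ := ∑ i, (k i) ^ 2

/-- A lattice vector regarded as a vector of `ℝ^d`. -/
def toR {d : ℕ} (k : Fin d → ℤ) : Fin d → ℝ := fun i => (k i : ℝ)

/-- The orbit `O(n) = h + ⌊n/2⌋ l₁ + ⌊(n+1)/2⌋ l₂`. -/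
def orbitB {d : ℕ} (h l₁ l₂ : Fin d → ℤ) (n : ℕ) : Fin d → ℤ :=
  h + ((n / 2 : ℕ) : ℤ) • l₁ + (((n + 1) / 2 : ℕ) : ℤ) • l₂

lemma ipZ_comm {d : ℕ} (a b : Fin d → ℤ) : ipZ a b = ipZ b a := by
  simp [ipZ, mul_comm]

lemma ipZ_add_left {d : ℕ} (a b c : Fin d → ℤ) :
    ipZ (a + b) c = ipZ a c + ipZ b c := by
  simp [ipZ, add_mul, Finset.sum_add_distrib]

lemma ipZ_smul_left {d : ℕ} (t : ℤ) (a b : Fin d → ℤ) :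
    ipZ (t • a) b = t * ipZ a b := by
  simp [ipZ, Finset.mul_sum, mul_assoc]

lemma ipZ_add_right {d : ℕ} (a b c : Fin d → ℤ) :
    ipZ a (b + c) = ipZ a b + ipZ a c := by
  rw [ipZ_comm, ipZ_add_left, ipZ_comm b a, ipZ_comm c a]

lemma ipZ_smul_right {d : ℕ} (t : ℤ) (a b : Fin d → ℤ) :
    ipZ a (t • b) = t * ipZ a b := by
  rw [ipZ_comm, ipZ_smul_left, ipZ_comm b a]

lemma nsqZ_eq_ipZ {d : ℕ} (a : Fin d → ℤ) : nsqZ a = ipZ a a := by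
  simp [nsqZ, ipZ, sq]

lemma nsqZ_nonneg {d : ℕ} (a : Fin d → ℤ) : 0 ≤ nsqZ a :=
  Finset.sum_nonneg fun i _ => sq_nonneg _

lemma nsqZ_pos {d : ℕ} {a : Fin d → ℤ} (ha : a ≠ 0) : 1 ≤ nsqZ a := by
  obtain ⟨i, hi⟩ : ∃ i, a i ≠ 0 := by
    by_contra hc
    push_neg at hc
    exact ha (funext hc)
  have h1 : 1 ≤ (a i) ^ 2 := by
    have := hi
    nlinarith [sq_nonneg (a i), Int.one_le_abs (by simpa using hi), sq_abs (a i)]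
  calc (1 : ℤ) ≤ (a i) ^ 2 := h1
    _ ≤ nsqZ a := Finset.single_le_sum (fun j _ => sq_nonneg (a j)) (Finset.mem_univ i)

lemma nsqZ_eq_zero {d : ℕ} {a : Fin d → ℤ} (ha : nsqZ a = 0) : a = 0 := by
  by_contra hc
  have := nsqZ_pos hc
  omega

/-- expansion of squared norm -/
lemma nsq_expand {d : ℕ} (h l₁ l₂ : Fin d → ℤ) (p q : ℤ)
    (hh1 : ipZ h l₁ = 0) (hh2 : ipZ h l₂ = 0) :
    nsqZ (h + p • l₁ + q • l₂) =
      nsqZ h + p ^ 2 * nsqZ l₁ + q ^ 2 * nsqZ l₂ + 2 * p * q * ipZ l₁ l₂ := by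
  have c1 : ipZ l₁ h = 0 := by rw [ipZ_comm]; exact hh1
  have c2 : ipZ l₂ h = 0 := by rw [ipZ_comm]; exact hh2
  simp only [nsqZ_eq_ipZ, ipZ_add_left, ipZ_add_right, ipZ_smul_left, ipZ_smul_right,
    hh1, hh2, c1, c2, ipZ_comm l₂ l₁]
  ring

lemma ip_expand {d : ℕ} (h l₁ l₂ v : Fin d → ℤ) (p q : ℤ) :
    ipZ (h + p • l₁ + q • l₂) v = ipZ h v + p * ipZ l₁ v + q * ipZ l₂ v := by
  simp only [ipZ_add_left, ipZ_smul_left]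

set_option maxHeartbeats 2000000 in
theorem stmt14 (d : ℕ) (hd : 3 ≤ d) (l₁ l₂ h : Fin d → ℤ)
    (hl₁ : l₁ ≠ 0) (hl₂ : l₂ ≠ 0)
    (hind : LinearIndependent ℝ ![toR l₁, toR l₂]) (hnorm : nsqZ l₁ = nsqZ l₂)
    (hh0 : h ≠ 0) (hh1 : ipZ h l₁ = 0) (hh2 : ipZ h l₂ = 0) (n : ℕ) :
    ((n : ℝ) + 1) ^ 2 * ((nsqZ (orbitB h l₁ l₂ (n + 1) - orbitB h l₁ l₂ n) : ℤ) : ℝ) /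
        (5 * ((nsqZ l₁ : ℤ) : ℝ)) ≤
      ((nsqZ (orbitB h l₁ l₂ n) * nsqZ (orbitB h l₁ l₂ (n + 1) - orbitB h l₁ l₂ n) -
          ipZ (orbitB h l₁ l₂ n) (orbitB h l₁ l₂ (n + 1) - orbitB h l₁ l₂ n) ^ 2 : ℤ) : ℝ) := by
  set L : ℤ := nsqZ l₁ with hLdef
  set b : ℤ := ipZ l₁ l₂ with hbdef
  set S : ℤ := nsqZ h with hSdef
  clear_value L b S
  have hL : 1 ≤ L := hLdef ▸ nsqZ_pos hl₁
  have hS : 1 ≤ S := hSdef ▸ nsqZ_pos hh0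
  -- strict Cauchy-Schwarz: b^2 < L^2
  have hb2 : b ^ 2 < L ^ 2 := by
    have hkey : 0 ≤ nsqZ (L • l₂ - b • l₁) := nsqZ_nonneg _
    have hexp : nsqZ (L • l₂ - b • l₁) = L * (L ^ 2 - b ^ 2) := by
      have : L • l₂ - b • l₁ = L • l₂ + (-b) • l₁ := by
        ext i; simp [sub_eq_add_neg, neg_smul]
      rw [this, nsqZ_eq_ipZ]
      simp only [ipZ_add_left, ipZ_add_right, ipZ_smul_left, ipZ_smul_right]
      rw [← nsqZ_eq_ipZ, ← nsqZ_eq_ipZ, ipZ_comm l₂ l₁, ← hnorm, ← hbdef, ← hLdef]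
      ring
    rcases lt_or_eq_of_le (show b ^ 2 ≤ L ^ 2 by nlinarith [hexp ▸ hkey]) with hlt | heq
    · exact hlt
    · exfalso
      have hz : nsqZ (L • l₂ - b • l₁) = 0 := by rw [hexp, ← heq]; ring
      have hv : L • l₂ - b • l₁ = 0 := nsqZ_eq_zero hz
      have hvR : (L : ℝ) • toR l₂ - (b : ℝ) • toR l₁ = 0 := by
        ext i
        have := congrFun hv i
        simp only [Pi.sub_apply, Pi.smul_apply, smul_eq_mul, Pi.zero_apply, toR] at this ⊢
        exact_mod_cast this
      have hpair := LinearIndependent.pair_iff.mp hind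
      have := (hpair (-(b : ℝ)) (L : ℝ) (by
        rw [neg_smul, neg_add_eq_sub]
        exact hvR)).2
      have : (L : ℝ) ≠ 0 := by positivity
      simp_all
  rcases Nat.even_or_odd n with ⟨m, hm⟩ | ⟨m, hm⟩
  · -- n = 2m, Δ = l₂
    have d1 : n / 2 = m := by omega
    have d2 : (n + 1) / 2 = m := by omega
    have d3 : (n + 1 + 1) / 2 = m + 1 := by omega
    have hOn : orbitB h l₁ l₂ n = h + (m : ℤ) • l₁ + (m : ℤ) • l₂ := by
      rw [orbitB, d1, d2]
    have hDelta : orbitB h l₁ l₂ (n + 1) - orbitB h l₁ l₂ n = l₂ := by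
      ext i
      simp only [orbitB, d1, d2, d3, Pi.sub_apply, Pi.add_apply, Pi.smul_apply, smul_eq_mul]
      push_cast
      ring
    rw [hDelta, hOn]
    rw [nsq_expand h l₁ l₂ _ _ hh1 hh2, ip_expand, hh2, ← nsqZ_eq_ipZ, ← hnorm,
      ← hSdef, ← hLdef, ← hbdef]
    have hLR : (0:ℝ) < 5 * ((L : ℤ) : ℝ) := by
      have : (1:ℝ) ≤ ((L:ℤ):ℝ) := by exact_mod_cast hL
      linarith
    rw [div_le_iff₀ hLR]
    have hZ : (1 : ℤ) + (m:ℤ) ^ 2 ≤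
        (S + (m:ℤ) ^ 2 * L + (m:ℤ) ^ 2 * L + 2 * (m:ℤ) * (m:ℤ) * b) * L -
          (0 + (m:ℤ) * b + (m:ℤ) * L) ^ 2 := by
      have hSL : 1 ≤ S * L := by nlinarith
      have hLb : (1:ℤ) ≤ L ^ 2 - b ^ 2 := by nlinarith
      nlinarith [mul_le_mul_of_nonneg_left hLb (sq_nonneg ((m:ℤ)))]
    have h5 : ((n : ℤ) + 1) ^ 2 ≤ 5 * (1 + (m:ℤ) ^ 2) := by
      have : (n : ℤ) = 2 * m := by exact_mod_cast (by omega : n = 2 * m)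
      rw [this]
      clear hZ hLR hDelta hOn hb2 hind
      nlinarith [sq_nonneg ((m:ℤ) - 2)]
    have hint : ((n : ℤ) + 1) ^ 2 * L ≤
        ((S + (m:ℤ) ^ 2 * L + (m:ℤ) ^ 2 * L + 2 * (m:ℤ) * (m:ℤ) * b) * L -
          (0 + (m:ℤ) * b + (m:ℤ) * L) ^ 2) * (5 * L) := by
      have h6 := mul_le_mul_of_nonneg_right h5 (show (0:ℤ) ≤ L by omega)
      have h7 := mul_le_mul_of_nonneg_right hZ (show (0:ℤ) ≤ 5 * L by omega)
      ring_nf at h6 h7 ⊢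
      linarith [h6, h7]
    calc ((n : ℝ) + 1) ^ 2 * (L : ℝ)
        = ((((n : ℤ) + 1) ^ 2 * L : ℤ) : ℝ) := by push_cast; ring
      _ ≤ ((((S + (m:ℤ) ^ 2 * L + (m:ℤ) ^ 2 * L + 2 * (m:ℤ) * (m:ℤ) * b) * L -
            (0 + (m:ℤ) * b + (m:ℤ) * L) ^ 2) * (5 * L) : ℤ) : ℝ) := by exact_mod_cast hint
      _ = _ := by push_cast; ring
  · -- n = 2m+1, Δ = l₁
    have d1 : n / 2 = m := by omega
    have d2 : (n + 1) / 2 = m + 1 := by omega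
    have d3 : (n + 1 + 1) / 2 = m + 1 := by omega
    have hOn : orbitB h l₁ l₂ n = h + (m : ℤ) • l₁ + ((m : ℤ) + 1) • l₂ := by
      rw [orbitB, d1, d2]; push_cast; rfl
    have hDelta : orbitB h l₁ l₂ (n + 1) - orbitB h l₁ l₂ n = l₁ := by
      ext i
      simp only [orbitB, d1, d2, d3, Pi.sub_apply, Pi.add_apply, Pi.smul_apply, smul_eq_mul]
      push_cast
      ring
    rw [hDelta, hOn]
    rw [nsq_expand h l₁ l₂ _ _ hh1 hh2, ip_expand, hh1, ← nsqZ_eq_ipZ, ipZ_comm l₂ l₁,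
      ← hnorm, ← hSdef, ← hLdef, ← hbdef]
    have hLR : (0:ℝ) < 5 * ((L : ℤ) : ℝ) := by
      have : (1:ℝ) ≤ ((L:ℤ):ℝ) := by exact_mod_cast hL
      linarith
    rw [div_le_iff₀ hLR]
    have hZ : (1 : ℤ) + ((m:ℤ) + 1) ^ 2 ≤
        (S + (m:ℤ) ^ 2 * L + ((m:ℤ) + 1) ^ 2 * L + 2 * (m:ℤ) * ((m:ℤ) + 1) * b) * L -
          (0 + (m:ℤ) * L + ((m:ℤ) + 1) * b) ^ 2 := by
      have hSL : 1 ≤ S * L := by nlinarith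
      have hLb : (1:ℤ) ≤ L ^ 2 - b ^ 2 := by nlinarith
      nlinarith [mul_le_mul_of_nonneg_left hLb (sq_nonneg ((m:ℤ) + 1))]
    have h5 : ((n : ℤ) + 1) ^ 2 ≤ 5 * (1 + ((m:ℤ) + 1) ^ 2) := by
      have : (n : ℤ) = 2 * m + 1 := by exact_mod_cast hm
      rw [this]
      clear hZ hLR hDelta hOn hb2 hind
      nlinarith [sq_nonneg ((m:ℤ) - 1)]
    have hint : ((n : ℤ) + 1) ^ 2 * L ≤
        ((S + (m:ℤ) ^ 2 * L + ((m:ℤ) + 1) ^ 2 * L + 2 * (m:ℤ) * ((m:ℤ) + 1) * b) * L -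
          (0 + (m:ℤ) * L + ((m:ℤ) + 1) * b) ^ 2) * (5 * L) := by
      have h6 := mul_le_mul_of_nonneg_right h5 (show (0:ℤ) ≤ L by omega)
      have h7 := mul_le_mul_of_nonneg_right hZ (show (0:ℤ) ≤ 5 * L by omega)
      ring_nf at h6 h7 ⊢
      linarith [h6, h7]
    calc ((n : ℝ) + 1) ^ 2 * (L : ℝ)
        = ((((n : ℤ) + 1) ^ 2 * L : ℤ) : ℝ) := by push_cast; ring
      _ ≤ ((((S + (m:ℤ) ^ 2 * L + ((m:ℤ) + 1) ^ 2 * L + 2 * (m:ℤ) * ((m:ℤ) + 1) * b) * L -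
            (0 + (m:ℤ) * L + ((m:ℤ) + 1) * b) ^ 2) * (5 * L) : ℤ) : ℝ) := by exact_mod_cast hint
      _ = _ := by push_cast; ring
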